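/- Given an FDFA F with leading automaton of n states and largest progress automaton of k states, the under-approximation Büchi automaton B̲ has O(n²k³) states and the over-approximation Büchi automaton B̄ has O(n²k²) states. -/

import Mathlib

set_option linter.unusedSectionVars false


/-- Prepend a finite word to an infinite word. -/
def prependW {α : Type} (u : List α) (w : ℕ → α) : ℕ → α :=
  fun i => if h : i < u.length then u.get ⟨i, h⟩ else w (i - u.length)

/-- The periodic infinite word `v^ω` (arbitrary when `v = []`). -/
def periodW {α : Type} [Inhabited α] (v : List α) : ℕ → α :=
  fun i => v.getD (i % v.length) default

/-- The ultimately periodic word `u · v^ω`. -/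
def upw {α : Type} [Inhabited α] (u v : List α) : ℕ → α :=
  prependW u (periodW v)

/-- The ultimately periodic words of an ω-language. -/
def UP {α : Type} [Inhabited α] (L : Set (ℕ → α)) : Set (ℕ → α) :=
  { w | ∃ u v : List α, v ≠ [] ∧ w = upw u v ∧ w ∈ L }

/-- `v^k` : `k`-fold repetition of the finite word `v`. -/
def rep {α : Type} (v : List α) (k : ℕ) : List α :=
  (List.replicate k v).flatten
/-- A nondeterministic Büchi automaton. -/
structure NBA (α : Type) : Type 1 where
  σ : Type
  fin : Fintype σ
  start : Set σ
  step : σ → α → Set σ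
  accept : Set σ

/-- The ω-language of a Büchi automaton: words admitting a run visiting
an accepting state infinitely often. -/
def NBA.lang {α : Type} (B : NBA α) : Set (ℕ → α) :=
  { w | ∃ r : ℕ → B.σ, r 0 ∈ B.start ∧ (∀ i, r (i + 1) ∈ B.step (r i) (w i)) ∧
      ∀ n, ∃ m, n ≤ m ∧ r m ∈ B.accept }

/-- An ω-language is ω-regular if some Büchi automaton recognizes it. -/
def IsOmegaRegular {α : Type} (L : Set (ℕ → α)) : Prop :=
  ∃ B : NBA α, B.lang = L
/-- A family of DFAs: a leading DFA `M` (accepting states irrelevant) and a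
progress DFA `A s` for each leading state `s`. -/
structure FDFA (α : Type) : Type 1 where
  S : Type
  finS : Fintype S
  M : DFA α S
  Pσ : S → Type
  finP : ∀ s, Fintype (Pσ s)
  A : ∀ s, DFA α (Pσ s)

/-- The decomposition `(u, v)` is accepted by the FDFA `F`:
`M(uv) = M(u)` and `v ∈ L(A^{M(u)})`. -/
def FDFA.acceptsDecomp {α : Type} (F : FDFA α) (u v : List α) : Prop :=
  F.M.eval (u ++ v) = F.M.eval u ∧ v ∈ (F.A (F.M.eval u)).accepts

/-- `UP(F)`: ultimately periodic words with an accepted decomposition. -/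
def FDFA.UPF {α : Type} [Inhabited α] (F : FDFA α) : Set (ℕ → α) :=
  { w | ∃ u v : List α, v ≠ [] ∧ w = upw u v ∧ F.acceptsDecomp u v }

/-- `L(M^u_u × (A^u)^{s_u}_q × (A^u)^q_q)`: loop words of the
under-approximation component for leading state `u` and progress state `q`. -/
def underLoop {α : Type} (F : FDFA α) (u : F.S) (q : F.Pσ u) : Set (List α) :=
  { y | F.M.evalFrom u y = u ∧ (F.A u).eval y = q ∧ (F.A u).evalFrom q y = q }

/-- `L(M^u_u × (A^u)^{s_u}_q)`: loop words of the over-approximation component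
for leading state `u` and progress state `q`. -/
def overLoop {α : Type} (F : FDFA α) (u : F.S) (q : F.Pσ u) : Set (List α) :=
  { y | F.M.evalFrom u y = u ∧ (F.A u).eval y = q }

/-- The finite word `p` is a prefix of the infinite word `w`. -/
def prefW {α : Type} [Inhabited α] (p : List α) (w : ℕ → α) : Prop :=
  ∀ i, i < p.length → w i = p.getD i default

/-- `w` is the infinite concatenation `x · ys 0 · ys 1 · ⋯`. -/
def isConcatW {α : Type} [Inhabited α] (x : List α) (ys : ℕ → List α)
    (w : ℕ → α) : Prop :=
  ∀ n : ℕ, prefW (x ++ ((List.range n).map ys).flatten) w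

/-- The ω-language of the under-approximation Büchi automaton `B̲`:
`⋃_{u, q accepting} L(M^{q₀}_u) · (L(M^u_u × (A^u)^{s_u}_q × (A^u)^q_q))^ω`. -/
def underLang {α : Type} [Inhabited α] (F : FDFA α) : Set (ℕ → α) :=
  { w | ∃ (u : F.S) (q : F.Pσ u), q ∈ (F.A u).accept ∧
      ∃ (x : List α) (ys : ℕ → List α), F.M.eval x = u ∧
        (∀ i, ys i ≠ [] ∧ ys i ∈ underLoop F u q) ∧ isConcatW x ys w }

/-- The ω-language of the over-approximation Büchi automaton `B̄`:
`⋃_{u, q accepting} L(M^{q₀}_u) · (L(M^u_u × (A^u)^{s_u}_q))^ω`. -/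
def overLang {α : Type} [Inhabited α] (F : FDFA α) : Set (ℕ → α) :=
  { w | ∃ (u : F.S) (q : F.Pσ u), q ∈ (F.A u).accept ∧
      ∃ (x : List α) (ys : ℕ → List α), F.M.eval x = u ∧
        (∀ i, ys i ≠ [] ∧ ys i ∈ overLoop F u q) ∧ isConcatW x ys w }

/-- `UP(L(B̲))`. -/
def underUP {α : Type} [Inhabited α] (F : FDFA α) : Set (ℕ → α) :=
  UP (underLang F)

/-- `UP(L(B̄))`. -/
def overUP {α : Type} [Inhabited α] (F : FDFA α) : Set (ℕ → α) :=
  UP (overLang F)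


-- === seg helpers (already tested) ===
def seg {α : Type} (w : ℕ → α) (a n : ℕ) : List α := List.ofFn fun i : Fin n => w (a + i)
@[simp] lemma seg_zero {α : Type} (w : ℕ → α) (a : ℕ) : seg w a 0 = [] := rfl
@[simp] lemma length_seg {α : Type} (w : ℕ → α) (a n : ℕ) : (seg w a n).length = n :=
  List.length_ofFn
lemma seg_succ {α : Type} (w : ℕ → α) (a n : ℕ) :
    seg w a (n + 1) = seg w a n ++ [w (a + n)] := by
  rw [seg, List.ofFn_succ', List.concat_eq_append]; simp [seg]
lemma seg_append {α : Type} (w : ℕ → α) (a m n : ℕ) :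
    seg w a m ++ seg w (a + m) n = seg w a (m + n) := by
  induction n with
  | zero => simp
  | succ n ih =>
      rw [show m + (n + 1) = (m + n) + 1 from rfl, seg_succ, seg_succ, ← List.append_assoc, ih,
        show a + m + n = a + (m + n) from by omega]
lemma getD_seg {α : Type} [Inhabited α] (w : ℕ → α) (a n i : ℕ) (h : i < n) :
    (seg w a n).getD i default = w (a + i) := by
  rw [List.getD_eq_getElem _ _ (by simpa using h)]; simp [seg]
lemma prefW_seg {α : Type} [Inhabited α] (w : ℕ → α) (n : ℕ) : prefW (seg w 0 n) w := by
  intro i hi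
  rw [getD_seg w 0 n i (by simpa using hi)]
  simp

-- === summation / segment index helpers ===
def Ssum (len : ℕ → ℕ) (n : ℕ) : ℕ := ((List.range n).map len).sum
@[simp] lemma Ssum_zero (len : ℕ → ℕ) : Ssum len 0 = 0 := rfl
lemma Ssum_succ (len : ℕ → ℕ) (n : ℕ) : Ssum len (n + 1) = Ssum len n + len n := by
  simp [Ssum, List.range_succ]

def segIdx (len : ℕ → ℕ) : ℕ → ℕ × ℕ
  | 0 => (0, 0)
  | m + 1 =>
    if (segIdx len m).2 + 1 < len (segIdx len m).1 then ((segIdx len m).1, (segIdx len m).2 + 1)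
    else ((segIdx len m).1 + 1, 0)

lemma segIdx_succ (len : ℕ → ℕ) (m : ℕ) :
    segIdx len (m + 1) =
      if (segIdx len m).2 + 1 < len (segIdx len m).1 then
        ((segIdx len m).1, (segIdx len m).2 + 1)
      else ((segIdx len m).1 + 1, 0) := by
  rw [segIdx]

lemma segIdx_spec (len : ℕ → ℕ) (hpos : ∀ n, 0 < len n) (m : ℕ) :
    Ssum len (segIdx len m).1 + (segIdx len m).2 = m ∧
      (segIdx len m).2 < len (segIdx len m).1 := by
  induction m with
  | zero => exact ⟨rfl, hpos 0⟩
  | succ m ih =>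
      obtain ⟨h1, h2⟩ := ih
      rw [segIdx_succ]
      by_cases h : (segIdx len m).2 + 1 < len (segIdx len m).1
      · rw [if_pos h]
        exact ⟨show Ssum len (segIdx len m).1 + ((segIdx len m).2 + 1) = m + 1 by omega, h⟩
      · rw [if_neg h]
        refine ⟨?_, show (0:ℕ) < len ((segIdx len m).1 + 1) from hpos _⟩
        show Ssum len ((segIdx len m).1 + 1) + 0 = m + 1
        have : (segIdx len m).2 + 1 = len (segIdx len m).1 := by omega
        rw [Ssum_succ]; omega

lemma segIdx_start (len : ℕ → ℕ) (hpos : ∀ n, 0 < len n) (n : ℕ) :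
    segIdx len (Ssum len n) = (n, 0) := by
  induction n with
  | zero => rfl
  | succ n ih =>
      have key : ∀ j, j < len n → segIdx len (Ssum len n + j) = (n, j) := by
        intro j hj
        induction j with
        | zero => simpa using ih
        | succ j ihj =>
            have hj' : j < len n := by omega
            rw [show Ssum len n + (j + 1) = (Ssum len n + j) + 1 from rfl, segIdx_succ,
              ihj hj']
            simp [hj]
      have h1 : 0 < len n := hpos n
      have hlast := key (len n - 1) (by omega)
      rw [Ssum_succ, show Ssum len n + len n = (Ssum len n + (len n - 1)) + 1 from by omega,
        segIdx_succ, hlast]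
      simp
      omega

lemma foldl_take_succ {β γ : Type} [Inhabited β] (f : γ → β → γ) (c : γ) (l : List β)
    (j : ℕ) (h : j < l.length) :
    (l.take (j + 1)).foldl f c = f ((l.take j).foldl f c) (l.getD j default) := by
  rw [List.take_succ, List.getElem?_eq_getElem h, List.getD_eq_getElem _ _ h,
    Option.toList_some, List.foldl_append, List.foldl_cons, List.foldl_nil]

section Gen
variable {α : Type} (F : FDFA α) (P : F.S → Type)
  (d : ∀ u, P u → α → P u) (s0 fn : ∀ u, F.Pσ u → P u)

@[reducible] def GenSt := F.S ⊕ Σ u : F.S, F.Pσ u × P u × Bool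

def genStart : Set (GenSt F P) :=
  { s | s = Sum.inl F.M.start ∨
    ∃ q, q ∈ (F.A F.M.start).accept ∧ s = Sum.inr ⟨F.M.start, q, s0 _ q, true⟩ }

def genStep (s : GenSt F P) (a : α) : Set (GenSt F P) :=
  match s with
  | Sum.inl p => { s' | s' = Sum.inl (F.M.step p a) ∨
      ∃ q, q ∈ (F.A (F.M.step p a)).accept ∧
        s' = Sum.inr ⟨F.M.step p a, q, s0 _ q, true⟩ }
  | Sum.inr c => { s' | s' = Sum.inr ⟨c.1, c.2.1, d c.1 c.2.2.1 a, false⟩ ∨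
      (d c.1 c.2.2.1 a = fn c.1 c.2.1 ∧ s' = Sum.inr ⟨c.1, c.2.1, s0 c.1 c.2.1, true⟩) }

def genAccept : Set (GenSt F P) := fun s =>
  match s with
  | Sum.inl _ => False
  | Sum.inr c => c.2.2.2 = true

@[reducible] def genNBA (finP' : ∀ u, Fintype (P u)) : NBA α where
  σ := GenSt F P
  fin := by
    letI := F.finS; letI := F.finP; letI := finP'
    unfold GenSt; infer_instance
  start := genStart F P s0
  step := genStep F P d s0 fn
  accept := genAccept F P

lemma mem_genStep_inl {p : F.S} {a : α} {s' : GenSt F P} :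
    s' ∈ genStep F P d s0 fn (Sum.inl p) a ↔
      (s' = Sum.inl (F.M.step p a) ∨
        ∃ q, q ∈ (F.A (F.M.step p a)).accept ∧
          s' = Sum.inr ⟨F.M.step p a, q, s0 _ q, true⟩) := Iff.rfl

lemma mem_genStep_inr {u : F.S} {q : F.Pσ u} {p : P u} {b : Bool} {a : α} {s' : GenSt F P} :
    s' ∈ genStep F P d s0 fn (Sum.inr ⟨u, q, p, b⟩) a ↔
      (s' = Sum.inr ⟨u, q, d u p a, false⟩ ∨
        (d u p a = fn u q ∧ s' = Sum.inr ⟨u, q, s0 u q, true⟩)) := Iff.rfl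

lemma mem_genAccept_inr {u : F.S} {q : F.Pσ u} {p : P u} {b : Bool} :
    (Sum.inr ⟨u, q, p, b⟩ : GenSt F P) ∈ genAccept F P ↔ b = true := Iff.rfl

lemma not_mem_genAccept_inl {p : F.S} : (Sum.inl p : GenSt F P) ∉ genAccept F P := fun h => h

lemma card_genNBA (finP' : ∀ u, Fintype (P u)) :
    @Fintype.card (genNBA F P d s0 fn finP').σ (genNBA F P d s0 fn finP').fin =
      @Fintype.card F.S F.finS +
        @Finset.sum F.S ℕ _ (@Finset.univ F.S F.finS)
          (fun u => @Fintype.card (F.Pσ u) (F.finP u) * (@Fintype.card (P u) (finP' u) * 2)) := by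
  letI := F.finS; letI := F.finP; letI := finP'
  have e : (genNBA F P d s0 fn finP').σ = (F.S ⊕ Σ u : F.S, F.Pσ u × P u × Bool) := rfl
  rw [@Fintype.card_congr _ _ ((genNBA F P d s0 fn finP').fin) _ (Equiv.cast e)]
  rw [Fintype.card_sum, Fintype.card_sigma]
  congr 1
  apply Finset.sum_congr rfl
  intro u _
  rw [Fintype.card_prod, Fintype.card_prod, Fintype.card_bool]

end Gen

section Lang
variable {α : Type} [Inhabited α] (F : FDFA α) (P : F.S → Type)
  (d : ∀ u, P u → α → P u) (s0 fn : ∀ u, F.Pσ u → P u)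

def genLang : Set (ℕ → α) :=
  { w | ∃ (u : F.S) (q : F.Pσ u), q ∈ (F.A u).accept ∧
      ∃ (x : List α) (ys : ℕ → List α), F.M.eval x = u ∧
        (∀ i, ys i ≠ [] ∧ (ys i).foldl (d u) (s0 u q) = fn u q) ∧ isConcatW x ys w }

lemma evalFrom_take_succ {α σ : Type} [Inhabited α] (M : DFA α σ) (s : σ) (x : List α)
    (t : ℕ) (h : t < x.length) :
    M.evalFrom s (x.take (t + 1)) = M.step (M.evalFrom s (x.take t)) (x.getD t default) :=
  foldl_take_succ M.step s x t h

lemma genLang_sub (finP' : ∀ u, Fintype (P u)) :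
    genLang F P d s0 fn ⊆ (genNBA F P d s0 fn finP').lang := by
  rintro w ⟨u, q, hq, x, ys, hx, hys, hcat⟩
  set len : ℕ → ℕ := fun i => (ys i).length with hlen
  have hpos : ∀ n, 0 < len n := fun n => List.length_pos_iff.mpr (hys n).1
  -- letter extraction
  have hXlen : ∀ n, (x ++ ((List.range n).map ys).flatten).length = x.length + Ssum len n := by
    intro n
    rw [List.length_append, List.length_flatten, List.map_map]
    rfl
  have hXsucc : ∀ n, x ++ ((List.range (n + 1)).map ys).flatten
      = (x ++ ((List.range n).map ys).flatten) ++ ys n := by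
    intro n
    rw [List.range_succ, List.map_append, List.flatten_append]
    simp
  have hw : ∀ n j, j < len n → w (x.length + Ssum len n + j) = (ys n).getD j default := by
    intro n j hj
    have hpre := hcat (n + 1)
    have hlt : x.length + Ssum len n + j
        < (x ++ ((List.range (n + 1)).map ys).flatten).length := by
      rw [hXlen, Ssum_succ]; omega
    have := hpre _ hlt
    rw [this, hXsucc, List.getD_append_right _ _ _ _ (by rw [hXlen]; omega)]
    congr 1
    rw [hXlen]; omega
  have hxw : ∀ t, t < x.length → w t = x.getD t default := by
    intro t ht
    have hpre := hcat 0
    simp only [List.range_zero, List.map_nil, List.flatten_nil, List.append_nil] at hpre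
    exact hpre t ht
  -- the run
  classical
  refine ⟨fun t =>
    if t < x.length then Sum.inl (F.M.evalFrom F.M.start (x.take t))
    else Sum.inr ⟨u, q,
      ((ys (segIdx len (t - x.length)).1).take (segIdx len (t - x.length)).2).foldl
        (d u) (s0 u q),
      decide ((segIdx len (t - x.length)).2 = 0)⟩, ?_, ?_, ?_⟩
  · -- start
    by_cases h0 : 0 < x.length
    · simp only [h0, if_pos]
      exact Or.inl (by simp)
    · have hx0 : x = [] := by
        cases x with | nil => rfl | cons a l => simp at h0
      simp only [if_neg (by omega : ¬ (0 < x.length))]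
      right
      have hu : u = F.M.start := by rw [← hx, hx0]; rfl
      subst hu
      exact ⟨q, hq, by simp [segIdx]⟩
  · -- steps
    intro t
    by_cases h1 : t + 1 < x.length
    · have h0 : t < x.length := by omega
      simp only [if_pos h0, if_pos h1]
      rw [mem_genStep_inl]
      left
      congr 1
      rw [evalFrom_take_succ F.M F.M.start x t h0, hxw t h0]
    · by_cases h0 : t < x.length
      · -- entering the component
        have ht1 : t + 1 = x.length := by omega
        simp only [if_pos h0, if_neg (by omega : ¬ (t + 1 < x.length))]
        rw [mem_genStep_inl]
        right
        have hstep : F.M.step (F.M.evalFrom F.M.start (x.take t)) (w t) = u := by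
          rw [← hx]
          show _ = F.M.evalFrom F.M.start x
          conv_rhs => rw [← List.take_length (l := x), ← ht1]
          rw [evalFrom_take_succ F.M F.M.start x t h0, hxw t h0]
        rw [hstep]
        refine ⟨q, hq, ?_⟩
        have : t + 1 - x.length = 0 := by omega
        rw [this]
        simp [segIdx]
      · -- inside the component
        have h0' : x.length ≤ t := by omega
        set m := t - x.length with hm
        obtain ⟨hs1, hs2⟩ := segIdx_spec len hpos m
        set n := (segIdx len m).1 with hn
        set j := (segIdx len m).2 with hj
        have hwt : w t = (ys n).getD j default := by
          have : t = x.length + Ssum len n + j := by omega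
          rw [this]; exact hw n j hs2
        have hm1 : t + 1 - x.length = m + 1 := by omega
        simp only [if_neg h0, if_neg (by omega : ¬ (t + 1 < x.length)), hm1]
        rw [mem_genStep_inr]
        by_cases hcase : j + 1 < len n
        · left
          have hseg : segIdx len (m + 1) = (n, j + 1) := by
            rw [segIdx_succ, ← hn, ← hj, if_pos hcase]
          rw [hseg]
          have : ((ys n).take (j + 1)).foldl (d u) (s0 u q)
              = d u (((ys n).take j).foldl (d u) (s0 u q)) ((ys n).getD j default) :=
            foldl_take_succ _ _ _ _ hs2
          rw [show ((n, j+1).1) = n from rfl, show ((n, j+1).2) = j + 1 from rfl, this, hwt]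
          simp
          rfl
        · right
          have hj1 : j + 1 = len n := by omega
          have hseg : segIdx len (m + 1) = (n + 1, 0) := by
            rw [segIdx_succ, ← hn, ← hj, if_neg hcase]
          constructor
          · rw [hwt, ← foldl_take_succ (d u) (s0 u q) (ys n) j hs2, hj1,
              show len n = (ys n).length from rfl, List.take_length]
            exact (hys n).2
          · rw [hseg]
            simp
  · -- accepting infinitely often
    intro N
    refine ⟨x.length + Ssum len N, ?_, ?_⟩
    · have : N ≤ Ssum len N := by
        induction N with
        | zero => simp
        | succ k ih =>
            rw [Ssum_succ]
            have := hpos k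
            have : k ≤ Ssum len k := by
              -- reprove since ih may depend
              exact ih
            omega
      omega
    · simp only [if_neg (by omega : ¬ (x.length + Ssum len N < x.length))]
      have : x.length + Ssum len N - x.length = Ssum len N := by omega
      rw [this, segIdx_start len hpos N]
      rw [mem_genAccept_inr]
      simp

end Lang
section Fwd
variable {α : Type} [Inhabited α] (F : FDFA α) (P : F.S → Type)
  (d : ∀ u, P u → α → P u) (s0 fn : ∀ u, F.Pσ u → P u)

lemma inr_inj {u : F.S} {q : F.Pσ u} {p p' : P u} {b b' : Bool}
    (h : (Sum.inr ⟨u, q, p, b⟩ : GenSt F P) = Sum.inr ⟨u, q, p', b'⟩) : p = p' ∧ b = b' := by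
  have h2 := Sum.inr.inj h
  rw [Sigma.mk.inj_iff] at h2
  obtain ⟨-, h4⟩ := h2
  rw [heq_iff_eq, Prod.mk.injEq, Prod.mk.injEq] at h4
  exact ⟨h4.2.1, h4.2.2⟩

lemma genLang_sup (finP' : ∀ u, Fintype (P u)) :
    (genNBA F P d s0 fn finP').lang ⊆ genLang F P d s0 fn := by
  classical
  rintro w ⟨r, hstart, hstep, hacc⟩
  have hstep' : ∀ t, r (t + 1) ∈ genStep F P d s0 fn (r t) (w t) := hstep
  have hstart' : r 0 ∈ genStart F P s0 := hstart
  have hacc' : ∀ n, ∃ m, n ≤ m ∧ r m ∈ genAccept F P := hacc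
  have hex : ∃ t, ∃ c, r t = Sum.inr c := by
    obtain ⟨m, -, hm⟩ := hacc' 0
    cases hr : r m with
    | inl p => rw [hr] at hm; exact absurd hm (not_mem_genAccept_inl F P)
    | inr c => exact ⟨m, c, hr⟩
  set T := Nat.find hex with hTdef
  have hT : ∃ c, r T = Sum.inr c := Nat.find_spec hex
  have hTmin : ∀ t, t < T → ¬ ∃ c, r t = Sum.inr c := fun t ht => Nat.find_min hex ht
  have pers : ∀ t (u : F.S) (q : F.Pσ u) (p : P u) (b : Bool), r t = Sum.inr ⟨u, q, p, b⟩ →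
      (r (t + 1) = Sum.inr ⟨u, q, d u p (w t), false⟩ ∨
        (d u p (w t) = fn u q ∧ r (t + 1) = Sum.inr ⟨u, q, s0 u q, true⟩)) := by
    intro t u q p b h
    have h2 := hstep' t
    rw [h, mem_genStep_inr] at h2
    exact h2
  have pre : ∀ t, t < T → r t = Sum.inl (F.M.evalFrom F.M.start (seg w 0 t)) := by
    intro t
    induction t with
    | zero =>
        intro h0
        rcases hstart' with h | ⟨q, hq, h⟩
        · rw [seg_zero]; exact h
        · exact absurd ⟨_, h⟩ (hTmin 0 h0)
    | succ t ih =>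
        intro h1
        have h0 : t < T := by omega
        have hrt := ih h0
        have h2 := hstep' t
        rw [hrt, mem_genStep_inl] at h2
        rcases h2 with h | ⟨q, hq, h⟩
        · rw [h, seg_succ]
          show Sum.inl (F.M.step (List.foldl F.M.step F.M.start (seg w 0 t)) (w t))
            = Sum.inl (List.foldl F.M.step F.M.start (seg w 0 t ++ [w (0 + t)]))
          rw [List.foldl_concat, Nat.zero_add]
        · exact absurd ⟨_, h⟩ (hTmin (t + 1) h1)
  have hTst : ∃ (u : F.S) (q : F.Pσ u), q ∈ (F.A u).accept ∧
      r T = Sum.inr ⟨u, q, s0 u q, true⟩ ∧ F.M.evalFrom F.M.start (seg w 0 T) = u := by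
    rcases Nat.eq_zero_or_pos T with h0 | hposT
    · rcases hstart' with h | ⟨q, hq, h⟩
      · exfalso
        obtain ⟨c, hc⟩ := hT
        rw [h0, h] at hc
        exact Sum.inl_ne_inr hc
      · refine ⟨F.M.start, q, hq, by rw [h0]; exact h, ?_⟩
        rw [h0, seg_zero]
        rfl
    · have hm : T - 1 < T := by omega
      have hrm := pre (T - 1) hm
      have h2 := hstep' (T - 1)
      rw [hrm, mem_genStep_inl] at h2
      have hT1 : T - 1 + 1 = T := by omega
      rw [hT1] at h2
      rcases h2 with h | ⟨q, hq, h⟩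
      · exfalso
        obtain ⟨c, hc⟩ := hT
        rw [h] at hc
        exact Sum.inl_ne_inr hc
      · refine ⟨_, q, hq, h, ?_⟩
        conv_lhs => rw [← hT1, seg_succ]
        show List.foldl F.M.step F.M.start (seg w 0 (T - 1) ++ [w (0 + (T - 1))]) = _
        rw [List.foldl_concat, Nat.zero_add]
        rfl
  obtain ⟨u, q, hq, hrT, hu⟩ := hTst
  have inv : ∀ k, ∃ (p : P u) (b : Bool), r (T + k) = Sum.inr ⟨u, q, p, b⟩ := by
    intro k
    induction k with
    | zero => exact ⟨s0 u q, true, hrT⟩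
    | succ k ih =>
        obtain ⟨p, b, h⟩ := ih
        rcases pers (T + k) u q p b h with h' | ⟨-, h'⟩
        · exact ⟨_, _, h'⟩
        · exact ⟨_, _, h'⟩
  have flag_of_acc : ∀ k, r (T + k) ∈ genAccept F P → r (T + k) = Sum.inr ⟨u, q, s0 u q, true⟩ := by
    intro k
    cases k with
    | zero => exact fun _ => hrT
    | succ k =>
        obtain ⟨p, b, h⟩ := inv k
        rcases pers (T + k) u q p b h with h' | ⟨-, h'⟩
        · intro hac
          rw [show T + (k + 1) = T + k + 1 from rfl, h'] at hac
          rw [mem_genAccept_inr] at hac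
          simp at hac
        · exact fun _ => h'
  have flags : ∀ N, ∃ t, N ≤ t ∧ r t = Sum.inr ⟨u, q, s0 u q, true⟩ := by
    intro N
    obtain ⟨m, hm1, hm2⟩ := hacc' (max N T)
    have hTm : T ≤ m := le_trans (le_max_right _ _) hm1
    obtain ⟨k, hk⟩ := Nat.le.dest hTm
    refine ⟨m, le_trans (le_max_left _ _) hm1, ?_⟩
    rw [← hk]
    exact flag_of_acc k (by rw [hk]; exact hm2)
  have hnext : ∀ s : ℕ, ∃ t, s < t ∧ r t = Sum.inr ⟨u, q, s0 u q, true⟩ := by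
    intro s
    obtain ⟨t, h1, h2⟩ := flags (s + 1)
    exact ⟨t, by omega, h2⟩
  let tt : ℕ → ℕ := fun n => Nat.rec (motive := fun _ => ℕ) T (fun _ prev => Nat.find (hnext prev)) n
  have tts : ∀ n, tt (n + 1) = Nat.find (hnext (tt n)) := fun n => rfl
  have httlt : ∀ n, tt n < tt (n + 1) := fun n => (Nat.find_spec (hnext (tt n))).1
  have httflag : ∀ n, r (tt n) = Sum.inr ⟨u, q, s0 u q, true⟩ := by
    intro n
    cases n with
    | zero => exact hrT
    | succ n => exact (Nat.find_spec (hnext (tt n))).2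
  have httmin : ∀ n s, tt n < s → s < tt (n + 1) →
      ¬ (r s = Sum.inr ⟨u, q, s0 u q, true⟩) := by
    intro n s h1 h2 hflag
    have h3 : s < Nat.find (hnext (tt n)) := by rw [← tts n]; exact h2
    exact Nat.find_min (hnext (tt n)) h3 ⟨h1, hflag⟩
  have hseg_run : ∀ n j, tt n + j < tt (n + 1) →
      ∃ b : Bool, r (tt n + j) = Sum.inr ⟨u, q, (seg w (tt n) j).foldl (d u) (s0 u q), b⟩ := by
    intro n j
    induction j with
    | zero =>
        intro _
        exact ⟨true, by simpa using httflag n⟩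
    | succ j ih =>
        intro hlt
        obtain ⟨b, hb⟩ := ih (by omega)
        rcases pers _ u q _ b hb with h' | ⟨-, h'⟩
        · refine ⟨false, ?_⟩
          rw [show tt n + (j + 1) = (tt n + j) + 1 from rfl, h', seg_succ, List.foldl_concat]
        · exfalso
          exact httmin n (tt n + j + 1) (by omega) (by omega) h'
  have loop : ∀ n, (seg w (tt n) (tt (n + 1) - tt n)).foldl (d u) (s0 u q) = fn u q := by
    intro n
    have hab : tt n < tt (n + 1) := httlt n
    have hj : tt n + (tt (n + 1) - tt n - 1) < tt (n + 1) := by omega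
    obtain ⟨bb, hbb⟩ := hseg_run n (tt (n + 1) - tt n - 1) hj
    have hb1 : tt n + (tt (n + 1) - tt n - 1) + 1 = tt (n + 1) := by omega
    rcases pers _ u q _ bb hbb with h' | ⟨hc, h'⟩
    · exfalso
      rw [hb1] at h'
      have h5 := httflag (n + 1)
      rw [h'] at h5
      obtain ⟨-, hb2⟩ := inr_inj F P h5
      simp at hb2
    · have he : seg w (tt n) (tt (n + 1) - tt n) = seg w (tt n) ((tt (n + 1) - tt n - 1) + 1) := by
        congr 1
        omega
      rw [he, seg_succ, List.foldl_concat]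
      exact hc
  refine ⟨u, q, hq, seg w 0 T, fun n => seg w (tt n) (tt (n + 1) - tt n), hu, ?_, ?_⟩
  · intro i
    show seg w (tt i) (tt (i + 1) - tt i) ≠ [] ∧ _
    refine ⟨?_, loop i⟩
    have h1 := httlt i
    intro hnil
    have h2 : (seg w (tt i) (tt (i + 1) - tt i)).length = 0 := by rw [hnil]; rfl
    rw [length_seg] at h2
    omega
  · have hflat : ∀ n, seg w 0 T ++
        ((List.range n).map (fun i => seg w (tt i) (tt (i + 1) - tt i))).flatten
        = seg w 0 (tt n) := by
      intro n
      induction n with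
      | zero =>
          simp only [List.range_zero, List.map_nil, List.flatten_nil, List.append_nil]
          rfl
      | succ n ih =>
          rw [List.range_succ, List.map_append, List.flatten_append, ← List.append_assoc, ih]
          have h3 := seg_append w 0 (tt n) (tt (n + 1) - tt n)
          rw [Nat.zero_add] at h3
          simp only [List.map_cons, List.map_nil, List.flatten_cons, List.flatten_nil,
            List.append_nil]
          rw [h3, show tt n + (tt (n + 1) - tt n) = tt (n + 1) from by have := httlt n; omega]
    intro n
    rw [hflat n]
    exact prefW_seg w (tt n)

end Fwd


section Inst
variable {α : Type} [Inhabited α]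

lemma genNBA_lang (F : FDFA α) (P : F.S → Type) (d : ∀ u, P u → α → P u)
    (s0 fn : ∀ u, F.Pσ u → P u) (finP' : ∀ u, Fintype (P u)) :
    (genNBA F P d s0 fn finP').lang = genLang F P d s0 fn :=
  Set.Subset.antisymm (genLang_sup F P d s0 fn finP') (genLang_sub F P d s0 fn finP')

lemma foldl_prod3 {A B C : Type} (f : A → α → A) (g : B → α → B) (h : C → α → C)
    (y : List α) (p : A × B × C) :
    y.foldl (fun p a => (f p.1 a, g p.2.1 a, h p.2.2 a)) p
      = (y.foldl f p.1, y.foldl g p.2.1, y.foldl h p.2.2) := by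
  induction y generalizing p with
  | nil => rfl
  | cons a y ih => simp only [List.foldl_cons, ih]

lemma foldl_prod2 {A B : Type} (f : A → α → A) (g : B → α → B)
    (y : List α) (p : A × B) :
    y.foldl (fun p a => (f p.1 a, g p.2 a)) p = (y.foldl f p.1, y.foldl g p.2) := by
  induction y generalizing p with
  | nil => rfl
  | cons a y ih => simp only [List.foldl_cons, ih]

/-- Parameters of the under-approximation. -/
def PU (F : FDFA α) : F.S → Type := fun u => F.S × F.Pσ u × F.Pσ u
def dU (F : FDFA α) : ∀ u, PU F u → α → PU F u :=
  fun u p a => (F.M.step p.1 a, (F.A u).step p.2.1 a, (F.A u).step p.2.2 a)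
def s0U (F : FDFA α) : ∀ u, F.Pσ u → PU F u := fun u q => (u, (F.A u).start, q)
def fnU (F : FDFA α) : ∀ u, F.Pσ u → PU F u := fun u q => (u, q, q)
def finPU (F : FDFA α) : ∀ u, Fintype (PU F u) := fun u =>
  @instFintypeProd _ _ F.finS (@instFintypeProd _ _ (F.finP u) (F.finP u))

lemma under_loop_iff (F : FDFA α) (u : F.S) (q : F.Pσ u) (y : List α) :
    y.foldl (dU F u) (s0U F u q) = fnU F u q ↔ y ∈ underLoop F u q := by
  show y.foldl (fun p a => (F.M.step p.1 a, (F.A u).step p.2.1 a, (F.A u).step p.2.2 a))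
    (u, (F.A u).start, q) = (u, q, q) ↔ _
  rw [foldl_prod3, Prod.mk.injEq, Prod.mk.injEq]
  exact Iff.rfl

lemma underLang_eq (F : FDFA α) : underLang F = genLang F (PU F) (dU F) (s0U F) (fnU F) := by
  ext w
  constructor
  · rintro ⟨u, q, hq, x, ys, hx, hys, hcat⟩
    exact ⟨u, q, hq, x, ys, hx,
      fun i => ⟨(hys i).1, (under_loop_iff F u q (ys i)).mpr (hys i).2⟩, hcat⟩
  · rintro ⟨u, q, hq, x, ys, hx, hys, hcat⟩
    exact ⟨u, q, hq, x, ys, hx,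
      fun i => ⟨(hys i).1, (under_loop_iff F u q (ys i)).mp (hys i).2⟩, hcat⟩

/-- Parameters of the over-approximation. -/
def PO (F : FDFA α) : F.S → Type := fun u => F.S × F.Pσ u
def dO (F : FDFA α) : ∀ u, PO F u → α → PO F u :=
  fun u p a => (F.M.step p.1 a, (F.A u).step p.2 a)
def s0O (F : FDFA α) : ∀ u, F.Pσ u → PO F u := fun u q => (u, (F.A u).start)
def fnO (F : FDFA α) : ∀ u, F.Pσ u → PO F u := fun u q => (u, q)
def finPO (F : FDFA α) : ∀ u, Fintype (PO F u) := fun u =>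
  @instFintypeProd _ _ F.finS (F.finP u)

lemma over_loop_iff (F : FDFA α) (u : F.S) (q : F.Pσ u) (y : List α) :
    y.foldl (dO F u) (s0O F u q) = fnO F u q ↔ y ∈ overLoop F u q := by
  show y.foldl (fun p a => (F.M.step p.1 a, (F.A u).step p.2 a))
    (u, (F.A u).start) = (u, q) ↔ _
  rw [foldl_prod2, Prod.mk.injEq]
  exact Iff.rfl

lemma overLang_eq (F : FDFA α) : overLang F = genLang F (PO F) (dO F) (s0O F) (fnO F) := by
  ext w
  constructor
  · rintro ⟨u, q, hq, x, ys, hx, hys, hcat⟩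
    exact ⟨u, q, hq, x, ys, hx,
      fun i => ⟨(hys i).1, (over_loop_iff F u q (ys i)).mpr (hys i).2⟩, hcat⟩
  · rintro ⟨u, q, hq, x, ys, hx, hys, hcat⟩
    exact ⟨u, q, hq, x, ys, hx,
      fun i => ⟨(hys i).1, (over_loop_iff F u q (ys i)).mp (hys i).2⟩, hcat⟩

end Inst

/-- If the leading automaton of `F` has `n` states and every progress automaton
has at most `k` states, then the under-approximation Büchi automaton can be
realized with `O(n²k³)` states and the over-approximation one with `O(n²k²)`
states. -/
theorem stmt_16 {α : Type} [Inhabited α] :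
    ∃ c : ℕ, ∀ (F : FDFA α) (n k : ℕ),
      @Fintype.card F.S F.finS = n →
      (∀ s : F.S, @Fintype.card (F.Pσ s) (F.finP s) ≤ k) →
      (∃ B : NBA α, @Fintype.card B.σ B.fin ≤ c * (n ^ 2 * k ^ 3) ∧
        UP B.lang = underUP F) ∧
      (∃ B : NBA α, @Fintype.card B.σ B.fin ≤ c * (n ^ 2 * k ^ 2) ∧
        UP B.lang = overUP F) := by
  refine ⟨3, ?_⟩
  intro F n k hn hk
  have hn1 : 1 ≤ n := by
    rw [← hn]; exact @Fintype.card_pos _ F.finS ⟨F.M.start⟩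
  have hk1 : 1 ≤ k :=
    le_trans (@Fintype.card_pos _ (F.finP F.M.start) ⟨(F.A F.M.start).start⟩) (hk F.M.start)
  constructor
  · refine ⟨genNBA F (PU F) (dU F) (s0U F) (fnU F) (finPU F), ?_, ?_⟩
    · rw [card_genNBA]
      have hbu : ∀ u ∈ (@Finset.univ F.S F.finS),
          @Fintype.card (F.Pσ u) (F.finP u) * (@Fintype.card (PU F u) (finPU F u) * 2)
            ≤ k * (n * (k * k) * 2) := by
        intro u _
        have hcu : @Fintype.card (PU F u) (finPU F u)
            = n * (@Fintype.card (F.Pσ u) (F.finP u) * @Fintype.card (F.Pσ u) (F.finP u)) := by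
          letI := F.finS; letI := F.finP
          show @Fintype.card (F.S × F.Pσ u × F.Pσ u) (finPU F u) = _
          rw [Subsingleton.elim (finPU F u) (inferInstance : Fintype (F.S × F.Pσ u × F.Pσ u))]
          rw [Fintype.card_prod, Fintype.card_prod, hn]
        rw [hcu]
        gcongr <;> exact hk u
      have hsum := Finset.sum_le_card_nsmul (@Finset.univ F.S F.finS) _ _ hbu
      rw [@Finset.card_univ _ F.finS, hn, smul_eq_mul] at hsum
      have hFn : @Fintype.card F.S F.finS = n := hn
      rw [hFn]
      have hpk : 1 ≤ k ^ 3 := Nat.one_le_pow _ _ (by omega)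
      have hnn : n ≤ n ^ 2 * k ^ 3 := by
        calc n = n * 1 := (Nat.mul_one n).symm
          _ ≤ n * (n * k ^ 3) := Nat.mul_le_mul_left n (by simpa using Nat.mul_le_mul hn1 hpk)
          _ = n ^ 2 * k ^ 3 := by ring
      refine le_trans (Nat.add_le_add_left hsum n) ?_
      calc n + n * (k * (n * (k * k) * 2)) = n + 2 * (n ^ 2 * k ^ 3) := by ring
        _ ≤ n ^ 2 * k ^ 3 + 2 * (n ^ 2 * k ^ 3) := by omega
        _ = 3 * (n ^ 2 * k ^ 3) := by ring
    · rw [genNBA_lang, ← underLang_eq]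
      rfl
  · refine ⟨genNBA F (PO F) (dO F) (s0O F) (fnO F) (finPO F), ?_, ?_⟩
    · rw [card_genNBA]
      have hbu : ∀ u ∈ (@Finset.univ F.S F.finS),
          @Fintype.card (F.Pσ u) (F.finP u) * (@Fintype.card (PO F u) (finPO F u) * 2)
            ≤ k * (n * k * 2) := by
        intro u _
        have hcu : @Fintype.card (PO F u) (finPO F u)
            = n * @Fintype.card (F.Pσ u) (F.finP u) := by
          letI := F.finS; letI := F.finP
          show @Fintype.card (F.S × F.Pσ u) (finPO F u) = _
          rw [Subsingleton.elim (finPO F u) (inferInstance : Fintype (F.S × F.Pσ u))]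
          rw [Fintype.card_prod, hn]
        rw [hcu]
        gcongr <;> exact hk u
      have hsum := Finset.sum_le_card_nsmul (@Finset.univ F.S F.finS) _ _ hbu
      rw [@Finset.card_univ _ F.finS, hn, smul_eq_mul] at hsum
      have hFn : @Fintype.card F.S F.finS = n := hn
      rw [hFn]
      have hpk : 1 ≤ k ^ 2 := Nat.one_le_pow _ _ (by omega)
      have hnn : n ≤ n ^ 2 * k ^ 2 := by
        calc n = n * 1 := (Nat.mul_one n).symm
          _ ≤ n * (n * k ^ 2) := Nat.mul_le_mul_left n (by simpa using Nat.mul_le_mul hn1 hpk)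
          _ = n ^ 2 * k ^ 2 := by ring
      refine le_trans (Nat.add_le_add_left hsum n) ?_
      calc n + n * (k * (n * k * 2)) = n + 2 * (n ^ 2 * k ^ 2) := by ring
        _ ≤ n ^ 2 * k ^ 2 + 2 * (n ^ 2 * k ^ 2) := by omega
        _ = 3 * (n ^ 2 * k ^ 2) := by ring
    · rw [genNBA_lang, ← overLang_eq]
      rfl
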